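/- Let (d, Q, E) be a VASS and (q, v), (q', v') configurations satisfying: (Θ1) for every m ≥ 1 there is a pseudo-run from (q, v) to (q', v') that uses every arc of E at least m times, and (Θ2) there are Δ, Δ' ∈ ℕ^d with every coordinate ≥ 1 such that (q, v) →*ℕ (q, v + Δ) and (q', v' + Δ') →*ℕ (q', v'). Then (q', Δ) →*ℤ (q', Δ'), i.e. there is a pseudo-run from (q', Δ) to (q', Δ'). -/

import Mathlib

/-- Vectors in `ℤ^d`. -/
abbrev Vec (d : ℕ) : Type := Fin d → ℤ

/-- An arc of a `d`-dimensional VASS with states `Q`. -/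
abbrev Arc (Q : Type) (d : ℕ) : Type := Q × Vec d × Q

/-- `IsRunOn E S π q v q' v'`: the list of arcs `π` (all belonging to `E`) forms a
pseudo-run from `(q, v)` to `(q', v')`, all of whose vectors (including endpoints)
are nonnegative on every coordinate in `S`.  Taking `S = ∅` gives pseudo-runs,
`S = Set.univ` gives runs, and `S = ↑C` gives `C`-runs. -/
inductive IsRunOn {Q : Type} {d : ℕ} (E : Finset (Arc Q d)) (S : Set (Fin d)) :
    List (Arc Q d) → Q → Vec d → Q → Vec d → Prop
  | nil (q : Q) (v : Vec d) (hv : ∀ i ∈ S, 0 ≤ v i) :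
      IsRunOn E S [] q v q v
  | cons (q q' q'' : Q) (v v'' z : Vec d) (π : List (Arc Q d))
      (hv : ∀ i ∈ S, 0 ≤ v i) (he : (q, z, q') ∈ E)
      (ht : IsRunOn E S π q' (v + z) q'' v'') :
      IsRunOn E S ((q, z, q') :: π) q v q'' v''

/-- Glueing: `glue C v w` agrees with `v` on coordinates in `C` and with `w` outside `C`. -/
def glue {d : ℕ} (C : Finset (Fin d)) (v w : Vec d) : Vec d :=
  fun i => if i ∈ C then v i else w i

namespace VassAux

variable {Q : Type} {d : ℕ}

def tgt (e : Arc Q d) : Q := e.2.2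
def avec (e : Arc Q d) : Vec d := e.2.1

def IsChain : List (Arc Q d) → Q → Q → Prop
  | [] => fun s t => s = t
  | e :: l => fun s t => e.1 = s ∧ IsChain l (tgt e) t

@[simp] lemma isChain_nil {s t : Q} : IsChain ([] : List (Arc Q d)) s t ↔ s = t := Iff.rfl
@[simp] lemma isChain_cons {e : Arc Q d} {l s t} :
    IsChain (e :: l) s t ↔ e.1 = s ∧ IsChain l (tgt e) t := Iff.rfl

def disp (π : List (Arc Q d)) : Vec d := (π.map avec).sum
def mdisp (M : Multiset (Arc Q d)) : Vec d := (M.map avec).sum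

@[simp] lemma disp_nil : disp ([] : List (Arc Q d)) = 0 := rfl
@[simp] lemma disp_cons (e : Arc Q d) (l) : disp (e :: l) = avec e + disp l := by
  simp [disp]

@[simp] lemma mdisp_coe (l : List (Arc Q d)) : mdisp (l : Multiset (Arc Q d)) = disp l := by
  simp [mdisp, disp]

@[simp] lemma mdisp_add (M N : Multiset (Arc Q d)) : mdisp (M + N) = mdisp M + mdisp N := by
  simp [mdisp]

lemma chain_append {π ρ : List (Arc Q d)} {a b c : Q}
    (h1 : IsChain π a b) (h2 : IsChain ρ b c) : IsChain (π ++ ρ) a c := by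
  induction π generalizing a with
  | nil => obtain rfl : a = b := h1; simpa using h2
  | cons e l ih => exact ⟨h1.1, ih h1.2⟩

lemma chain_split {π ρ : List (Arc Q d)} {a c : Q}
    (h : IsChain (π ++ ρ) a c) : ∃ b, IsChain π a b ∧ IsChain ρ b c := by
  induction π generalizing a with
  | nil => exact ⟨a, rfl, h⟩
  | cons e l ih =>
    obtain ⟨b, hb1, hb2⟩ := ih h.2
    exact ⟨b, ⟨h.1, hb1⟩, hb2⟩

lemma chain_split_at {W : List (Arc Q d)} {a c x : Q}
    (h : IsChain W a c) (hx : x ∈ a :: W.map tgt) :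
    ∃ A B, W = A ++ B ∧ IsChain A a x ∧ IsChain B x c := by
  induction W generalizing a with
  | nil =>
    obtain rfl : a = c := h
    simp at hx
    subst hx
    exact ⟨[], [], rfl, rfl, rfl⟩
  | cons e l ih =>
    obtain ⟨h1, h2⟩ := h
    subst h1
    by_cases hxa : x = e.1
    · subst hxa
      exact ⟨[], e :: l, rfl, rfl, ⟨rfl, h2⟩⟩
    · have hx' : x ∈ tgt e :: l.map tgt := by
        simp only [List.map_cons, List.mem_cons] at hx
        rcases hx with h | h | h
        · exact absurd h hxa
        · exact List.mem_cons.2 (Or.inl h)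
        · exact List.mem_cons.2 (Or.inr h)
      obtain ⟨A, B, rfl, hA, hB⟩ := ih h2 hx'
      exact ⟨e :: A, B, rfl, ⟨rfl, hA⟩, hB⟩

lemma chain_mem_visits {W : List (Arc Q d)} {a c : Q} {f : Arc Q d}
    (h : IsChain W a c) (hf : f ∈ W) : f.1 ∈ a :: W.map tgt := by
  induction W generalizing a with
  | nil => simp at hf
  | cons e l ih =>
    obtain ⟨h1, h2⟩ := h
    subst h1
    rcases List.mem_cons.1 hf with rfl | hf'
    · exact List.mem_cons_self
    · have := ih h2 hf'
      simp only [List.map_cons]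
      exact List.mem_cons.2 (Or.inr this)

lemma first_enter {V : List Q} {q' : Q} (hq' : q' ∈ V) :
    ∀ (P : List (Arc Q d)) (s : Q), IsChain P s q' →
      s ∈ V ∨ ∃ f ∈ P, f.1 ∉ V ∧ tgt f ∈ V := by
  intro P
  induction P with
  | nil => intro s h; obtain rfl : s = q' := h; exact Or.inl hq'
  | cons e l ih =>
    intro s h
    obtain ⟨h1, h2⟩ := h
    subst h1
    by_cases hs : e.1 ∈ V
    · exact Or.inl hs
    · rcases ih (tgt e) h2 with h | ⟨f, hf, hf1, hf2⟩
      · exact Or.inr ⟨e, List.mem_cons_self, hs, h⟩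
      · exact Or.inr ⟨f, List.mem_cons.2 (Or.inr hf), hf1, hf2⟩

end VassAux

set_option linter.unusedSectionVars false
namespace VassAux
variable {Q : Type} {d : ℕ} [DecidableEq Q] [DecidableEq (Arc Q d)]

def exc (R : Multiset (Arc Q d)) (u : Q) : ℤ :=
  ((R.filter (fun e => e.1 = u)).card : ℤ) - ((R.filter (fun e => tgt e = u)).card : ℤ)

lemma exc_add (R S : Multiset (Arc Q d)) (u : Q) : exc (R + S) u = exc R u + exc S u := by
  simp only [exc, Multiset.filter_add, Multiset.card_add]
  push_cast
  ring

lemma exc_cons (e : Arc Q d) (R : Multiset (Arc Q d)) (u : Q) :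
    exc (e ::ₘ R) u = exc R u + ((if e.1 = u then 1 else 0) - (if tgt e = u then 1 else 0)) := by
  by_cases h1 : e.1 = u <;> by_cases h2 : tgt e = u <;>
    simp [exc, Multiset.filter_cons, h1, h2] <;> push_cast <;> ring

lemma exc_erase {e : Arc Q d} {R : Multiset (Arc Q d)} (he : e ∈ R) (u : Q) :
    exc (R.erase e) u
      = exc R u - ((if e.1 = u then 1 else 0) - (if tgt e = u then 1 else 0)) := by
  have h := exc_cons e (R.erase e) u
  rw [Multiset.cons_erase he] at h
  omega

lemma chain_exc {π : List (Arc Q d)} {a b : Q} (h : IsChain π a b) (u : Q) :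
    exc (π : Multiset (Arc Q d)) u = (if a = u then 1 else 0) - (if b = u then 1 else 0) := by
  induction π generalizing a with
  | nil =>
    obtain rfl : a = b := h
    simp [exc]
  | cons e l ih =>
    obtain ⟨h1, h2⟩ := h
    subst h1
    have hc : ((e :: l : List (Arc Q d)) : Multiset (Arc Q d)) = e ::ₘ (↑l) := rfl
    rw [hc, exc_cons, ih h2]
    by_cases hx : e.1 = u <;> by_cases hy : tgt e = u <;> by_cases hz : b = u <;>
      simp [hx, hy, hz]

lemma out_of_in {R : Multiset (Arc Q d)} {x : Q} (hbal : exc R x = 0)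
    {f : Arc Q d} (hf : f ∈ R) (hfx : tgt f = x) : ∃ g ∈ R, g.1 = x := by
  have h1 : f ∈ R.filter (fun e => tgt e = x) := Multiset.mem_filter.2 ⟨hf, hfx⟩
  have h2 : 0 < (R.filter (fun e => tgt e = x)).card :=
    Multiset.card_pos.2 (fun h => by simp [h] at h1)
  have h3 : 0 < (R.filter (fun e => e.1 = x)).card := by
    simp only [exc] at hbal; omega
  obtain ⟨g, hg⟩ := Multiset.card_pos_iff_exists_mem.1 h3
  exact ⟨g, (Multiset.mem_filter.1 hg).1, (Multiset.mem_filter.1 hg).2⟩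

lemma if_swap_eq (y u : Q) : (if y = u then (1 : ℤ) else 0) = (if u = y then 1 else 0) := by
  rcases eq_or_ne y u with h | h
  · simp [h]
  · simp [h, h.symm]

lemma walk_exists :
    ∀ (n : ℕ) (R : Multiset (Arc Q d)) (y x : Q), R.card = n → y ≠ x →
      (∀ u, u ≠ x → (if u = y then (1 : ℤ) else 0) ≤ exc R u) →
      ∃ π : List (Arc Q d), IsChain π y x ∧ (↑π : Multiset (Arc Q d)) ≤ R := by
  intro n
  induction n with
  | zero =>
    intro R y x hcard hyx H
    have hR : R = 0 := Multiset.card_eq_zero.1 hcard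
    have h := H y hyx
    simp [hR, exc] at h
  | succ n ih =>
    intro R y x hcard hyx H
    have hy : (1 : ℤ) ≤ exc R y := by simpa using H y hyx
    have hpos : 0 < (R.filter (fun e => e.1 = y)).card := by
      simp only [exc] at hy; omega
    obtain ⟨e, he⟩ := Multiset.card_pos_iff_exists_mem.1 hpos
    obtain ⟨heR, hey⟩ := Multiset.mem_filter.1 he
    by_cases ht : tgt e = x
    · exact ⟨[e], ⟨hey, ht⟩, by simpa using Multiset.singleton_le.2 heR⟩
    · have hcard' : (R.erase e).card = n := by
        rw [Multiset.card_erase_of_mem heR, hcard]; rfl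
      have H' : ∀ u, u ≠ x → (if u = tgt e then (1 : ℤ) else 0) ≤ exc (R.erase e) u := by
        intro u hux
        have he' := exc_erase heR u
        have hu := H u hux
        rw [hey, if_swap_eq y u, if_swap_eq (tgt e) u] at he'
        by_cases h1 : u = tgt e <;> by_cases h2 : u = y <;>
          simp [h1, h2] at he' hu ⊢ <;> omega
      obtain ⟨π, hπ, hπle⟩ := ih (R.erase e) (tgt e) x hcard' ht H'
      refine ⟨e :: π, ⟨hey, hπ⟩, ?_⟩
      have h2 : (e ::ₘ (↑π : Multiset (Arc Q d))) ≤ e ::ₘ R.erase e :=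
        Multiset.cons_le_cons _ hπle
      rwa [Multiset.cons_erase heR] at h2

lemma ext_closed {R : Multiset (Arc Q d)} (hbal : ∀ u, exc R u = 0)
    {g : Arc Q d} (hg : g ∈ R) :
    ∃ C : List (Arc Q d), IsChain C g.1 g.1 ∧ (↑C : Multiset (Arc Q d)) ≤ R ∧ C ≠ [] := by
  by_cases ht : tgt g = g.1
  · exact ⟨[g], ⟨rfl, ht⟩, by simpa using Multiset.singleton_le.2 hg, by simp⟩
  · have H : ∀ u, u ≠ g.1 → (if u = tgt g then (1 : ℤ) else 0) ≤ exc (R.erase g) u := by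
      intro u hux
      have he' := exc_erase hg u
      have hb := hbal u
      rw [if_swap_eq g.1 u, if_swap_eq (tgt g) u] at he'
      by_cases h1 : u = tgt g
      · rw [if_pos h1] at he' ⊢
        rw [if_neg hux] at he'
        omega
      · rw [if_neg h1] at he' ⊢
        rw [if_neg hux] at he'
        omega
    obtain ⟨π, hπ, hπle⟩ := walk_exists (R.erase g).card (R.erase g) (tgt g) g.1 rfl ht H
    refine ⟨g :: π, ⟨rfl, hπ⟩, ?_, by simp⟩
    have h2 : (g ::ₘ (↑π : Multiset (Arc Q d))) ≤ g ::ₘ R.erase g :=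
      Multiset.cons_le_cons _ hπle
    rwa [Multiset.cons_erase hg] at h2

end VassAux

set_option linter.unusedSectionVars false
namespace VassAux
variable {Q : Type} {d : ℕ} [DecidableEq Q] [DecidableEq (Arc Q d)]

lemma run_dest {E : Finset (Arc Q d)} {S : Set (Fin d)} {π : List (Arc Q d)}
    {a b : Q} {u w : Vec d} (h : IsRunOn E S π a u b w) :
    IsChain π a b ∧ (∀ e ∈ π, e ∈ E) ∧ w = u + disp π := by
  induction h with
  | nil q v hv => exact ⟨rfl, by simp, by simp⟩
  | cons q q1 q2 v v2 z π hv he ht ih =>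
    refine ⟨⟨rfl, ih.1⟩, ?_, ?_⟩
    · intro e he'
      rcases List.mem_cons.1 he' with rfl | h'
      · exact he
      · exact ih.2.1 e h'
    · rw [ih.2.2, disp_cons]
      show v + z + disp π = v + (avec (q, z, q1) + disp π)
      rw [← add_assoc]
      rfl

lemma chain_run {E : Finset (Arc Q d)} {π : List (Arc Q d)} {a b : Q}
    (h : IsChain π a b) (hE : ∀ e ∈ π, e ∈ E) (u : Vec d) :
    IsRunOn E ∅ π a u b (u + disp π) := by
  induction π generalizing a u with
  | nil =>
    obtain rfl : a = b := h
    simpa using IsRunOn.nil (E := E) (S := (∅ : Set (Fin d))) a u (by simp)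
  | cons e l ih =>
    obtain ⟨h1, h2⟩ := h
    obtain ⟨s, z, t⟩ := e
    subst h1
    have hrun := ih h2 (fun f hf => hE f (List.mem_cons_of_mem _ hf)) (u + z)
    have hh : IsRunOn E ∅ (((s, z, t) : Arc Q d) :: l) s u b ((u + z) + disp l) :=
      IsRunOn.cons s t b u _ z l (by simp) (hE _ (List.mem_cons_self)) hrun
    have : (u + z) + disp l = u + disp (((s, z, t) : Arc Q d) :: l) := by
      rw [disp_cons]
      show u + z + disp l = u + (z + disp l)
      rw [add_assoc]
    rwa [this] at hh

lemma merge (E : Finset (Arc Q d)) (q' : Q) (M : Multiset (Arc Q d))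
    (hbal : ∀ u, exc M u = 0)
    (hME : ∀ f ∈ M, f ∈ E)
    (hEM : ∀ f ∈ E, f ∈ M)
    (HC : ∀ f ∈ E, ∃ P, IsChain P f.1 q' ∧ ∀ g ∈ P, g ∈ E) :
    ∀ (n : ℕ) (R : Multiset (Arc Q d)) (W : List (Arc Q d)), R.card = n →
      IsChain W q' q' → R + ↑W = M →
      ∃ W' : List (Arc Q d), IsChain W' q' q' ∧ (↑W' : Multiset (Arc Q d)) = M := by
  intro n
  induction n using Nat.strong_induction_on with
  | _ n ih =>
    intro R W hcard hW hRW
    by_cases hR0 : R = 0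
    · exact ⟨W, hW, by simpa [hR0] using hRW⟩
    obtain ⟨e, he⟩ := Multiset.exists_mem_of_ne_zero hR0
    have hRM : R ≤ M := hRW ▸ le_add_right le_rfl
    have heM : e ∈ M := Multiset.mem_of_le hRM he
    have heE : e ∈ E := hME e heM
    have hWbal : ∀ u, exc (↑W : Multiset (Arc Q d)) u = 0 := by
      intro u
      rw [chain_exc hW]
      ring
    have hRbal : ∀ u, exc R u = 0 := by
      intro u
      have h1 := exc_add R (↑W) u
      rw [hRW] at h1
      have := hbal u
      have := hWbal u
      omega
    -- the visited states
    set V : List Q := q' :: W.map tgt with hV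
    have hq'V : q' ∈ V := List.mem_cons_self
    obtain ⟨P, hPc, hPE⟩ := HC e heE
    have hfe := first_enter (V := V) hq'V P e.1 hPc
    -- obtain a vertex x ∈ V with an out-arc of R at x
    have hxg : ∃ x ∈ V, ∃ g ∈ R, g.1 = x := by
      rcases hfe with hs | ⟨f, hfP, hf1, hf2⟩
      · exact ⟨e.1, hs, e, he, rfl⟩
      · have hfE : f ∈ E := hPE f hfP
        have hfM : f ∈ M := hEM f hfE
        have hfW : f ∉ W := by
          intro hfW
          exact hf1 (chain_mem_visits hW hfW)
        have hfR : f ∈ R := by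
          have hf' : f ∈ R + (↑W : Multiset (Arc Q d)) := hRW ▸ hfM
          rcases Multiset.mem_add.1 hf' with h' | h'
          · exact h'
          · exact absurd (Multiset.mem_coe.1 h') hfW
        obtain ⟨g, hgR, hgx⟩ := out_of_in (hRbal (tgt f)) hfR rfl
        exact ⟨tgt f, hf2, g, hgR, hgx⟩
    obtain ⟨x, hxV, g, hgR, hgx⟩ := hxg
    obtain ⟨C, hCc, hCR, hCne⟩ := ext_closed hRbal hgR
    rw [hgx] at hCc
    obtain ⟨A, B, hWAB, hA, hB⟩ := chain_split_at hW hxV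
    have hW'c : IsChain (A ++ (C ++ B)) q' q' :=
      chain_append hA (chain_append hCc hB)
    have hCcard : 0 < Multiset.card (↑C : Multiset (Arc Q d)) := by
      rw [Multiset.card_pos]
      simpa using hCne
    have hcard' : (R - ↑C).card < n := by
      have hle := Multiset.card_le_card hCR
      rw [Multiset.card_sub hCR]
      omega
    have hRW' : (R - ↑C) + ↑(A ++ (C ++ B)) = M := by
      have hc1 : (↑(A ++ (C ++ B)) : Multiset (Arc Q d)) = ↑A + (↑C + ↑B) := by
        simp
      have hc2 : (↑W : Multiset (Arc Q d)) = ↑A + ↑B := by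
        rw [hWAB]; simp
      rw [hc1, ← hRW, hc2]
      have h3 : (R - ↑C) + ↑C = R := tsub_add_cancel_of_le hCR
      calc (R - ↑C) + (↑A + (↑C + ↑B)) = ((R - ↑C) + ↑C) + (↑A + ↑B) := by
            rw [add_left_comm (↑A : Multiset (Arc Q d)) (↑C) (↑B), ← add_assoc]
        _ = R + (↑A + ↑B) := by rw [h3]
    exact ih _ hcard' (R - ↑C) (A ++ (C ++ B)) rfl hW'c hRW'

end VassAux

/-- under `Θ1` and `Θ2` there is a pseudo-run from `(q', Δ)` to `(q', Δ')`. -/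
theorem vass_claim_deltas {d : ℕ} {Q : Type} [DecidableEq Q]
    (hd : 1 ≤ d) (E : Finset (Arc Q d)) (q q' : Q) (v v' : Vec d)
    (hv : ∀ i, 0 ≤ v i) (hv' : ∀ i, 0 ≤ v' i)
    (h1 : ∀ m : ℕ, 1 ≤ m →
      ∃ π, IsRunOn E ∅ π q v q' v' ∧ ∀ e ∈ E, m ≤ π.count e)
    (Δ Δ' : Vec d) (hΔ : ∀ i, 1 ≤ Δ i) (hΔ' : ∀ i, 1 ≤ Δ' i)
    (h2a : ∃ π, IsRunOn E Set.univ π q v q (v + Δ))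
    (h2b : ∃ π, IsRunOn E Set.univ π q' (v' + Δ') q' v') :
    ∃ π, IsRunOn E ∅ π q' Δ q' Δ' := by
  classical
  obtain ⟨π₁, hπ₁, hπ₁c⟩ := h1 1 le_rfl
  obtain ⟨hc₁, hE₁, hd₁⟩ := VassAux.run_dest hπ₁
  obtain ⟨α, hα⟩ := h2a
  obtain ⟨hcα, hEα, hdα⟩ := VassAux.run_dest hα
  obtain ⟨β, hβ⟩ := h2b
  obtain ⟨hcβ, hEβ, hdβ⟩ := VassAux.run_dest hβ
  set m := π₁.length + α.length + β.length + 1 with hm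
  obtain ⟨πm, hπm, hπmc⟩ := h1 m (by omega)
  obtain ⟨hcm, hEm, hdm⟩ := VassAux.run_dest hπm
  -- counting bridge between `List.count` and `Multiset.count`
  have hcnt : ∀ (l : List (Arc Q d)) (e : Arc Q d),
      List.count e l = Multiset.count e (↑l : Multiset (Arc Q d)) := by
    intro l e
    induction l with
    | nil => simp
    | cons f l ih =>
      have h1' : ((f :: l : List (Arc Q d)) : Multiset (Arc Q d)) = f ::ₘ (↑l) := rfl
      rw [List.count_cons, h1', Multiset.count_cons, ih]
      by_cases h : f = e
      · subst h; simp
      · have hb : (f == e) = false := beq_eq_false_iff_ne.2 h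
        simp [hb, (Ne.symm h : e ≠ f)]
  set X : Multiset (Arc Q d) := (↑π₁ : Multiset (Arc Q d)) + ↑α + ↑β with hX
  have hXc : ∀ e, X.count e = List.count e π₁ + List.count e α + List.count e β := by
    intro e
    rw [hX, Multiset.count_add, Multiset.count_add, ← hcnt, ← hcnt, ← hcnt]
  have hXle : X ≤ (↑πm : Multiset (Arc Q d)) := by
    rw [Multiset.le_iff_count]
    intro e
    by_cases heE : e ∈ E
    · have h1' := hπmc e heE
      have h2' : List.count e π₁ ≤ π₁.length := List.count_le_length
      have h3' : List.count e α ≤ α.length := List.count_le_length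
      have h4' : List.count e β ≤ β.length := List.count_le_length
      rw [hXc, ← hcnt πm e]
      omega
    · have e1 : e ∉ π₁ := fun h => heE (hE₁ e h)
      have e2 : e ∉ α := fun h => heE (hEα e h)
      have e3 : e ∉ β := fun h => heE (hEβ e h)
      have h0 : X.count e = 0 := by
        rw [hXc]
        rw [List.count_eq_zero_of_not_mem e1, List.count_eq_zero_of_not_mem e2,
          List.count_eq_zero_of_not_mem e3]
      simp [h0]
  set M : Multiset (Arc Q d) := ↑πm - X with hMdef
  have hMX : M + X = ↑πm := tsub_add_cancel_of_le hXle
  have hbal : ∀ u, VassAux.exc M u = 0 := by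
    intro u
    have hadd := VassAux.exc_add M X u
    have hadd2 : VassAux.exc X u
        = VassAux.exc (↑π₁ : Multiset (Arc Q d)) u + VassAux.exc (↑α : Multiset (Arc Q d)) u
          + VassAux.exc (↑β : Multiset (Arc Q d)) u := by
      rw [hX, VassAux.exc_add, VassAux.exc_add]
    rw [hMX] at hadd
    rw [VassAux.chain_exc hcm, hadd2, VassAux.chain_exc hc₁, VassAux.chain_exc hcα,
      VassAux.chain_exc hcβ] at hadd
    split_ifs at hadd <;> omega
  have hME : ∀ f ∈ M, f ∈ E := by
    intro f hf
    have h' : f ∈ (↑πm : Multiset (Arc Q d)) := Multiset.mem_of_le (hMdef ▸ tsub_le_self) hf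
    exact hEm f (Multiset.mem_coe.1 h')
  have hEM : ∀ f ∈ E, f ∈ M := by
    intro f hf
    have h1' := hπmc f hf
    have h2' : List.count f π₁ ≤ π₁.length := List.count_le_length
    have h3' : List.count f α ≤ α.length := List.count_le_length
    have h4' : List.count f β ≤ β.length := List.count_le_length
    have hMc : M.count f = Multiset.count f (↑πm : Multiset (Arc Q d)) - X.count f := by
      rw [hMdef, Multiset.count_sub]
    have : 0 < M.count f := by
      rw [hMc, ← hcnt πm f, hXc]
      omega
    exact Multiset.count_pos.1 this
  have HC : ∀ f ∈ E, ∃ P, VassAux.IsChain P f.1 q' ∧ ∀ g ∈ P, g ∈ E := by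
    intro f hf
    have hfπ : f ∈ π₁ := by
      have h' := hπ₁c f hf
      by_contra hnot
      rw [List.count_eq_zero_of_not_mem hnot] at h'
      omega
    obtain ⟨s, t, rfl⟩ := List.append_of_mem hfπ
    obtain ⟨u, hu1, hu2⟩ := VassAux.chain_split hc₁
    obtain ⟨hf1, hft⟩ := hu2
    subst hf1
    exact ⟨f :: t, ⟨rfl, hft⟩, fun g hg => hE₁ g (List.mem_append.2 (Or.inr hg))⟩
  have hdisp1 : VassAux.disp π₁ = v' - v := by rw [hd₁]; abel
  have hdispm : VassAux.disp πm = v' - v := by rw [hdm]; abel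
  have hdispα : VassAux.disp α = Δ := (add_left_cancel hdα).symm
  have hdispβ : VassAux.disp β = -Δ' := by
    funext i
    have h' := congrFun hdβ i
    simp only [Pi.add_apply, Pi.neg_apply] at h' ⊢
    omega
  have hdispM : VassAux.mdisp M = Δ' - Δ := by
    have h' := congrArg VassAux.mdisp hMX
    rw [VassAux.mdisp_add] at h'
    have hXd : VassAux.mdisp X = VassAux.disp π₁ + VassAux.disp α + VassAux.disp β := by
      rw [hX, VassAux.mdisp_add, VassAux.mdisp_add, VassAux.mdisp_coe, VassAux.mdisp_coe,
        VassAux.mdisp_coe]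
    rw [hXd, VassAux.mdisp_coe, hdisp1, hdispα, hdispβ, hdispm] at h'
    funext i
    have h'' := congrFun h' i
    simp only [Pi.add_apply, Pi.sub_apply, Pi.neg_apply] at h'' ⊢
    omega
  obtain ⟨W, hWc, hWM⟩ :=
    VassAux.merge E q' M hbal hME hEM HC M.card M [] rfl rfl (by simp)
  have hWE : ∀ e ∈ W, e ∈ E := fun e he => hME e (hWM ▸ (Multiset.mem_coe.2 he))
  have hrun := VassAux.chain_run (E := E) hWc hWE Δ
  have hdW : VassAux.disp W = Δ' - Δ := by rw [← VassAux.mdisp_coe, hWM, hdispM]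
  rw [hdW] at hrun
  have hfin : Δ + (Δ' - Δ) = Δ' := by abel
  rw [hfin] at hrun
  exact ⟨W, hrun⟩
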